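/- Under the dynamic-threshold differential equations dα_j/dt = -λ(t)(φ(α_j(t)) - φ(α_{j-1}(t))) with φ(α_0) = 0, α_j(T) = 0, and λ(t) ≥ 0, φ nonincreasing and nonnegative: if α_1, …, α_n is a solution then α_j(t) ≥ α_{j+1}(t) for all t ∈ [0,T] and all j. -/
import Mathlib

open MeasureTheory

lemma core_comparison (T t0 : ℝ) (f g f' g' : ℝ → ℝ)
    (ht0 : t0 ∈ Set.Icc (0:ℝ) T)
    (hf : ∀ t ∈ Set.Icc (0:ℝ) T, HasDerivAt f (f' t) t)
    (hg : ∀ t ∈ Set.Icc (0:ℝ) T, HasDerivAt g (g' t) t)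
    (hg' : ∀ t ∈ Set.Icc (0:ℝ) T, g' t ≤ 0)
    (hf' : ∀ t ∈ Set.Icc (0:ℝ) T, g t < f t → 0 ≤ f' t)
    (hTle : f T ≤ g T) :
    f t0 ≤ g t0 := by
  by_contra hcon
  push_neg at hcon
  have ht0T : t0 ≤ T := ht0.2
  set S : Set ℝ := {t | t ∈ Set.Icc t0 T ∧ f t ≤ g t} with hSdef
  have hTS : T ∈ S := ⟨⟨ht0T, le_refl T⟩, hTle⟩
  have hsub : ∀ {t}, t ∈ Set.Icc t0 T → t ∈ Set.Icc (0:ℝ) T :=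
    fun {t} ht => ⟨le_trans ht0.1 ht.1, ht.2⟩
  have hSclosed : IsClosed S := by
    have hcont : ContinuousOn (fun t => f t - g t) (Set.Icc t0 T) := fun t ht =>
      (((hf t (hsub ht)).continuousAt).sub ((hg t (hsub ht)).continuousAt)).continuousWithinAt
    have : S = Set.Icc t0 T ∩ (fun t => f t - g t) ⁻¹' Set.Iic 0 := by
      ext t
      simp [hSdef, Set.mem_setOf_eq, sub_nonpos]
    rw [this]
    exact hcont.preimage_isClosed_of_isClosed isClosed_Icc isClosed_Iic
  have hbdd : BddBelow S := ⟨t0, fun t ht => ht.1.1⟩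
  set c := sInf S with hc
  have hcS : c ∈ S := hSclosed.csInf_mem ⟨T, hTS⟩ hbdd
  have ht0c : t0 < c := by
    rcases lt_or_eq_of_le hcS.1.1 with h | h
    · exact h
    · exact absurd hcS.2 (by rw [← h]; exact not_le.2 hcon)
  have hIccsub : Set.Icc t0 c ⊆ Set.Icc (0:ℝ) T :=
    fun t ht => ⟨le_trans ht0.1 ht.1, le_trans ht.2 hcS.1.2⟩
  -- g is antitone on [t0, c]
  have hganti : AntitoneOn g (Set.Icc t0 c) := by
    apply antitoneOn_of_deriv_nonpos (convex_Icc t0 c)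
    · exact fun t ht => ((hg t (hIccsub ht)).continuousAt).continuousWithinAt
    · intro t ht
      rw [interior_Icc] at ht
      exact ((hg t (hIccsub (Set.Ioo_subset_Icc_self ht))).differentiableAt).differentiableWithinAt
    · intro t ht
      rw [interior_Icc] at ht
      have ht' := hIccsub (Set.Ioo_subset_Icc_self ht)
      rw [(hg t ht').deriv]
      exact hg' t ht'
  -- f is monotone on [t0, c]
  have hfmono : MonotoneOn f (Set.Icc t0 c) := by
    apply monotoneOn_of_deriv_nonneg (convex_Icc t0 c)
    · exact fun t ht => ((hf t (hIccsub ht)).continuousAt).continuousWithinAt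
    · intro t ht
      rw [interior_Icc] at ht
      exact ((hf t (hIccsub (Set.Ioo_subset_Icc_self ht))).differentiableAt).differentiableWithinAt
    · intro t ht
      rw [interior_Icc] at ht
      have ht' := hIccsub (Set.Ioo_subset_Icc_self ht)
      rw [(hf t ht').deriv]
      apply hf' t ht'
      have htS : t ∉ S := notMem_of_lt_csInf ht.2 hbdd
      have : ¬ f t ≤ g t := fun hle => htS ⟨⟨le_of_lt ht.1, le_trans (le_of_lt ht.2) hcS.1.2⟩, hle⟩
      exact not_le.1 this
  have h1 : f t0 ≤ f c := hfmono (Set.left_mem_Icc.2 (le_of_lt ht0c)) (Set.right_mem_Icc.2 (le_of_lt ht0c)) (le_of_lt ht0c)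
  have h2 : g c ≤ g t0 := hganti (Set.left_mem_Icc.2 (le_of_lt ht0c)) (Set.right_mem_Icc.2 (le_of_lt ht0c)) (le_of_lt ht0c)
  exact absurd (h1.trans (hcS.2.trans h2)) (not_le.2 hcon)

/-- Ordering of the optimal critical curves: for the dynamic-threshold system
`dα_j/dt = -λ(t)(φ(α_j(t)) - φ(α_{j-1}(t)))` with the convention `φ(α_0) ≡ 0`,
terminal conditions `α_j(T) = 0`, `λ ≥ 0` continuous, and `φ` continuous, nonincreasing
and nonnegative, the solutions satisfy `α_{j+1}(t) ≤ α_j(t)` on `[0,T]`. -/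
theorem critical_curves_ordered
    (T : ℝ) (hT : 0 < T)
    (lam : ℝ → ℝ) (hlam_cont : Continuous lam) (hlam_nonneg : ∀ t, 0 ≤ lam t)
    (φ : ℝ → ℝ) (hφ_cont : Continuous φ) (hφ_anti : Antitone φ) (hφ_nonneg : ∀ x, 0 ≤ φ x)
    (n : ℕ) (hn : 1 ≤ n)
    (a : ℕ → ℝ → ℝ)
    (Φ : ℕ → ℝ → ℝ)
    (hΦ : ∀ j t, Φ j t = if j = 0 then 0 else φ (a j t))
    (hode : ∀ j, 1 ≤ j → j ≤ n → ∀ t ∈ Set.Icc (0:ℝ) T,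
      HasDerivAt (a j) (-(lam t) * (Φ j t - Φ (j - 1) t)) t)
    (hterm : ∀ j, 1 ≤ j → j ≤ n → a j T = 0) :
    ∀ j, 1 ≤ j → j < n → ∀ t ∈ Set.Icc (0:ℝ) T, a (j + 1) t ≤ a j t := by
  -- comparison step: if Φ (j-1) ≤ φ ∘ a j on [0,T], then a (j+1) ≤ a j on [0,T]
  have hstep : ∀ j, 1 ≤ j → j + 1 ≤ n →
      (∀ t ∈ Set.Icc (0:ℝ) T, Φ (j - 1) t ≤ φ (a j t)) →
      ∀ t ∈ Set.Icc (0:ℝ) T, a (j + 1) t ≤ a j t := by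
    intro j hj1 hjn hkey t ht
    have hj0 : j ≠ 0 := Nat.one_le_iff_ne_zero.1 hj1
    refine core_comparison T t (a (j+1)) (a j)
      (fun s => -(lam s) * (Φ (j+1) s - Φ ((j+1) - 1) s))
      (fun s => -(lam s) * (Φ j s - Φ (j - 1) s)) ht
      (hode (j+1) (by omega) hjn) (hode j hj1 (by omega)) ?_ ?_ ?_
    · intro s hs
      have h1 : Φ (j-1) s ≤ Φ j s := by
        rw [hΦ j s, if_neg hj0]; exact hkey s hs
      have := mul_nonneg (hlam_nonneg s) (sub_nonneg.2 h1)
      show -(lam s) * (Φ j s - Φ (j - 1) s) ≤ 0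
      nlinarith
    · intro s hs hlt
      have hΦj : Φ (j+1) s ≤ Φ ((j+1)-1) s := by
        rw [hΦ (j+1) s, if_neg (by omega), Nat.add_sub_cancel, hΦ j s, if_neg hj0]
        exact hφ_anti (le_of_lt hlt)
      have := mul_nonneg (hlam_nonneg s) (sub_nonneg.2 hΦj)
      show 0 ≤ -(lam s) * (Φ (j+1) s - Φ ((j+1) - 1) s)
      nlinarith
    · rw [hterm (j+1) (by omega) hjn, hterm j hj1 (by omega)]
  -- induction: Φ (j-1) ≤ φ ∘ a j on [0,T] for 1 ≤ j ≤ n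
  have hkey : ∀ j, 1 ≤ j → j ≤ n → ∀ t ∈ Set.Icc (0:ℝ) T, Φ (j - 1) t ≤ φ (a j t) := by
    intro j hj1
    induction j, hj1 using Nat.le_induction with
    | base =>
      intro _ t ht
      simp only [Nat.sub_self, hΦ 0 t, if_pos rfl]
      exact hφ_nonneg _
    | succ j hj1 ih =>
      intro hjn t ht
      have hjn' : j ≤ n := by omega
      have hord := hstep j hj1 hjn (ih hjn')
      rw [Nat.add_sub_cancel, hΦ j t, if_neg (Nat.one_le_iff_ne_zero.1 hj1)]
      exact hφ_anti (hord t ht)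
  intro j hj1 hjn t ht
  exact hstep j hj1 (by omega) (hkey j hj1 (by omega)) t ht
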